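/- Let u(n) count partitions of [n] into sets of noncrossing lists, with u(0)=1, and let U(x) = sum_{n≥0} u(n) x^n as a formal power series. Then U satisfies the functional equation U(x) = sum_{k≥0} k! * (x U(x))^k. -/

import Mathlib

def SetOfNCLists (n : ℕ) : Type :=
  {S : Finset (List (Fin n)) // (∀ l ∈ S, l ≠ [] ∧ l.Nodup) ∧
    (∀ x : Fin n, ∃! l, l ∈ S ∧ x ∈ l) ∧
    ¬ ∃ a b c d : Fin n, a < b ∧ b < c ∧ c < d ∧
      ∃ l₁ ∈ S, ∃ l₂ ∈ S, l₁ ≠ l₂ ∧ a ∈ l₁ ∧ c ∈ l₁ ∧ b ∈ l₂ ∧ d ∈ l₂}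

noncomputable def u (n : ℕ) : ℕ := Nat.card (SetOfNCLists n)

open Finset

namespace NCLaux

/-- nodup lists over a fintype form a finite type -/
instance findup (α : Type*) [Fintype α] [DecidableEq α] : Finite {l : List α // l.Nodup} := by
  have : Function.Injective (fun l : {l : List α // l.Nodup} =>
      (fun i : Fin (Fintype.card α + 1) => l.1[i.1]?)) := by
    intro l l' h
    refine Subtype.ext (List.ext_getElem? fun m => ?_)
    rcases lt_or_ge m (Fintype.card α + 1) with hm | hm
    · exact congrFun h ⟨m, hm⟩
    · rw [List.getElem?_eq_none_iff.2, List.getElem?_eq_none_iff.2]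
      · exact le_trans (List.Nodup.length_le_card l'.2) (by omega)
      · exact le_trans (List.Nodup.length_le_card l.2) (by omega)
  exact Finite.of_injective _ this

instance (n : ℕ) : Finite (SetOfNCLists n) := by
  have : Function.Injective (fun P : SetOfNCLists n =>
      (fun l : {l : List (Fin n) // l.Nodup} => l.1 ∈ P.1 : _ → Prop)) := by
    rintro ⟨S, hS⟩ ⟨S', hS'⟩ h
    simp only at h
    refine Subtype.ext (Finset.ext fun l => ⟨fun hl => ?_, fun hl => ?_⟩)
    · exact congrFun h ⟨l, (hS.1 l hl).2⟩ ▸ hl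
    · have := congrFun h ⟨l, (hS'.1 l hl).2⟩
      dsimp at this; rw [this]; exact hl
  exact Finite.of_injective _ this

instance : Unique (SetOfNCLists 0) where
  default := ⟨∅, by
    refine ⟨fun l hl => absurd hl (by simp), fun x => x.elim0, ?_⟩
    rintro ⟨a, -⟩; exact a.elim0⟩
  uniq := by
    rintro ⟨S, hS⟩
    refine Subtype.ext (Finset.eq_empty_of_forall_notMem fun l hl => ?_)
    obtain ⟨hne, -⟩ := hS.1 l hl
    obtain ⟨x, -⟩ := List.exists_mem_of_ne_nil l hne
    exact x.elim0

lemma u_zero : u 0 = 1 := Nat.card_unique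

/-- the sigma type used for the decomposition -/
def D (n : ℕ) : Type :=
  Σ k : Fin (n + 1), Σ l : ↥(finsuppAntidiag (range k.1) (n - k.1)),
    Equiv.Perm (Fin k.1) × ((i : Fin k.1) → SetOfNCLists (l.1 i.1))

lemma card_sigma' {ι : Type*} [Fintype ι] (f : ι → Type*) [∀ i, Finite (f i)] :
    Nat.card (Σ i, f i) = ∑ i, Nat.card (f i) := by
  letI : ∀ i, Fintype (f i) := fun i => Fintype.ofFinite _
  simp [Nat.card_eq_fintype_card]

lemma card_inner (n k : ℕ) (l : ℕ →₀ ℕ) :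
      Nat.card (Equiv.Perm (Fin k) × ((i : Fin k) → SetOfNCLists (l i.1)))
        = k.factorial * ∏ i ∈ range k, u (l i) := by
    rw [Nat.card_prod, Nat.card_pi, Nat.card_eq_fintype_card, Fintype.card_perm,
      Fintype.card_fin]
    congr 1
    exact Fin.prod_univ_eq_prod_range (fun i => u (l i)) k

lemma card_mid (n k : ℕ) :
    (∑ l : ↥(finsuppAntidiag (range k) (n - k)),
        Nat.card (Equiv.Perm (Fin k) × ((i : Fin k) → SetOfNCLists (l.1 i.1))))
      = k.factorial * ∑ l ∈ finsuppAntidiag (range k) (n - k),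
          ∏ i ∈ range k, u (l i) := by
  rw [Finset.mul_sum]
  rw [← Finset.sum_coe_sort (finsuppAntidiag (range k) (n - k))
      (fun f => k.factorial * ∏ i ∈ range k, u (f i))]
  exact Finset.sum_congr rfl fun l _ => card_inner n k l.1

lemma card_D (n : ℕ) : Nat.card (D n) =
    ∑ k ∈ range (n + 1), k.factorial *
      ∑ l ∈ finsuppAntidiag (range k) (n - k), ∏ i ∈ range k, u (l i) := by
  unfold D
  rw [card_sigma']
  refine (Fin.sum_univ_eq_sum_range
    (fun k => Nat.card (Σ l : ↥(finsuppAntidiag (range k) (n - k)),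
      Equiv.Perm (Fin k) × ((i : Fin k) → SetOfNCLists (l.1 i.1)))) (n+1)).trans
    (Finset.sum_congr rfl fun k _ => ?_)
  rw [card_sigma']
  exact card_mid n k


section Assemble

variable {n k : ℕ} (l : ℕ →₀ ℕ)

def bfun (l : ℕ →₀ ℕ) (i : ℕ) : ℕ := i + ∑ j ∈ range i, l j

@[simp] lemma bfun_zero : bfun l 0 = 0 := by simp [bfun]

lemma bfun_succ (i : ℕ) : bfun l (i + 1) = bfun l i + (l i + 1) := by
  simp [bfun, Finset.sum_range_succ]; ring

lemma bfun_mono : StrictMono (bfun l) :=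
  strictMono_nat_of_lt_succ (fun i => by rw [bfun_succ]; omega)

/-- `x` lies strictly inside the `i`-th gap -/
def InGap (i : ℕ) {n : ℕ} (x : Fin n) : Prop := bfun l i < x.1 ∧ x.1 < bfun l (i + 1)

lemma find_gap : ∀ (m : ℕ) (x : ℕ), x < bfun l m → ∃ i < m, bfun l i ≤ x ∧ x < bfun l (i + 1) := by
  intro m
  induction m with
  | zero => intro x hx; rw [bfun_zero] at hx; omega
  | succ m ih =>
    intro x hx
    rcases lt_or_ge x (bfun l m) with h | h
    · obtain ⟨i, hi, h1, h2⟩ := ih x h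
      exact ⟨i, by omega, h1, h2⟩
    · exact ⟨m, by omega, h, hx⟩

lemma gap_le {i j x : ℕ} (h1 : bfun l j ≤ x) (h2 : x < bfun l (i + 1)) : j ≤ i := by
  by_contra h
  have := (bfun_mono l).monotone (show i + 1 ≤ j by omega)
  omega

lemma gap_unique {i j : ℕ} {x : Fin n} (h1 : InGap l i x) (h2 : InGap l j x) : i = j :=
  le_antisymm (gap_le l (le_of_lt h1.1) h2.2) (gap_le l (le_of_lt h2.1) h1.2)

variable (hk : k ≤ n) (hl : l ∈ finsuppAntidiag (range k) (n - k))

include hk hl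

lemma bfun_top : bfun l k = n := by
  obtain ⟨h1, -⟩ := mem_finsuppAntidiag.1 hl
  simp only [bfun, h1]
  omega

lemma k_pos (hn : 0 < n) : 0 < k := by
  rcases Nat.eq_zero_or_pos k with rfl | h
  · rw [Finset.range_zero, Finset.finsuppAntidiag_empty_of_ne_zero (by omega)] at hl
    exact absurd hl (Finset.notMem_empty _)
  · exact h

lemma bfun_lt (i : Fin k) : bfun l i.1 < n :=
  (bfun_mono l i.isLt).trans_eq (bfun_top l hk hl)

/-- the elements of the block of `0` -/
def bF (i : Fin k) : Fin n := ⟨bfun l i.1, bfun_lt l hk hl i⟩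

lemma bF_injective : Function.Injective (bF l hk hl) := by
  intro i j h
  exact Fin.ext ((bfun_mono l).injective (congrArg Fin.val h))

lemma bF_strictMono : StrictMono (bF l hk hl) := by
  intro i j hij
  exact bfun_mono l (show i.1 < j.1 from hij)

lemma eF_aux (i : Fin k) (y : Fin (l i.1)) : bfun l i.1 + 1 + y.1 < n := by
  have h1 : bfun l (i.1 + 1) = bfun l i.1 + (l i.1 + 1) := bfun_succ l i.1
  have h2 : bfun l (i.1 + 1) ≤ bfun l k := (bfun_mono l).monotone i.isLt
  have h3 := bfun_top l hk hl
  have := y.isLt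
  omega

/-- the embedding of the `i`-th gap -/
def eF (i : Fin k) (y : Fin (l i.1)) : Fin n := ⟨bfun l i.1 + 1 + y.1, eF_aux l hk hl i y⟩

lemma eF_val (i : Fin k) (y : Fin (l i.1)) : (eF l hk hl i y).1 = bfun l i.1 + 1 + y.1 := rfl

lemma eF_injective (i : Fin k) : Function.Injective (eF l hk hl i) := by
  intro y z h
  have := congrArg Fin.val h
  rw [eF_val, eF_val] at this
  exact Fin.ext (by omega)

lemma eF_in_gap (i : Fin k) (y : Fin (l i.1)) : InGap l i.1 (eF l hk hl i y) := by
  have h1 : bfun l (i.1 + 1) = bfun l i.1 + (l i.1 + 1) := bfun_succ l i.1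
  have h2 := y.isLt
  have h3 := eF_val l hk hl i y
  exact ⟨by omega, by omega⟩

lemma in_gap_eq_eF {i : Fin k} {x : Fin n} (h : InGap l i.1 x) :
    ∃ y : Fin (l i.1), eF l hk hl i y = x := by
  obtain ⟨h1, h2⟩ := h
  have h3 : bfun l (i.1 + 1) = bfun l i.1 + (l i.1 + 1) := bfun_succ l i.1
  refine ⟨⟨x.1 - bfun l i.1 - 1, by omega⟩, Fin.ext ?_⟩
  rw [eF_val]
  simp only
  omega

lemma exists_gap (x : Fin n) : ∃ i : Fin k, bfun l i.1 ≤ x.1 ∧ x.1 < bfun l (i.1 + 1) := by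
  obtain ⟨i, hi, h1, h2⟩ := find_gap l k x.1 ((bfun_top l hk hl) ▸ x.isLt)
  exact ⟨⟨i, hi⟩, h1, h2⟩

lemma bfun_not_gap (i : ℕ) (j : Fin k) : ¬ InGap l i (bF l hk hl j) := by
  rintro ⟨h1, h2⟩
  have hv : (bF l hk hl j).1 = bfun l j.1 := rfl
  rw [hv] at h1 h2
  have ha : i < j.1 := (bfun_mono l).lt_iff_lt.1 h1
  have hb : j.1 < i + 1 := (bfun_mono l).lt_iff_lt.1 h2
  omega

end Assemble

section Assemble2

variable {n k : ℕ} (l : ℕ →₀ ℕ) (hk : k ≤ n) (hl : l ∈ finsuppAntidiag (range k) (n - k))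
  (σ : Equiv.Perm (Fin k)) (P : ∀ i : Fin k, SetOfNCLists (l i.1))

/-- the list of the block containing `0` -/
def blockList : List (Fin n) := List.ofFn (fun j => bF l hk hl (σ j))

/-- the lists sitting inside the `i`-th gap -/
def gapLists (i : Fin k) : Finset (List (Fin n)) :=
  (P i).1.image (List.map (eF l hk hl i))

/-- the assembled set of noncrossing lists -/
def assembleSet : Finset (List (Fin n)) :=
  insert (blockList l hk hl σ) (Finset.univ.biUnion fun i => gapLists l hk hl P i)

lemma blockList_length : (blockList l hk hl σ).length = k := by simp [blockList]

lemma mem_blockList {x : Fin n} : x ∈ blockList l hk hl σ ↔ ∃ i : Fin k, bF l hk hl i = x := by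
  rw [blockList, List.mem_ofFn]
  constructor
  · rintro ⟨j, hj⟩; exact ⟨σ j, hj⟩
  · rintro ⟨i, hi⟩; exact ⟨σ.symm i, by simpa using hi⟩

lemma mem_gapLists {i : Fin k} {L : List (Fin n)} :
    L ∈ gapLists l hk hl P i ↔ ∃ M ∈ (P i).1, L = List.map (eF l hk hl i) M := by
  rw [gapLists, Finset.mem_image]
  exact ⟨fun ⟨M, h1, h2⟩ => ⟨M, h1, h2.symm⟩, fun ⟨M, h1, h2⟩ => ⟨M, h1, h2.symm⟩⟩

lemma gapLists_in_gap {i : Fin k} {L : List (Fin n)} (hL : L ∈ gapLists l hk hl P i)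
    {x : Fin n} (hx : x ∈ L) : InGap l i.1 x := by
  obtain ⟨M, hM, rfl⟩ := (mem_gapLists l hk hl P).1 hL
  obtain ⟨y, hy, rfl⟩ := List.mem_map.1 hx
  exact eF_in_gap l hk hl i y

lemma mem_assembleSet {L : List (Fin n)} :
    L ∈ assembleSet l hk hl σ P ↔ L = blockList l hk hl σ ∨ ∃ i, L ∈ gapLists l hk hl P i := by
  rw [assembleSet, Finset.mem_insert, Finset.mem_biUnion]
  simp

lemma zero_mem_blockList (hn : 0 < n) : (⟨0, hn⟩ : Fin n) ∈ blockList l hk hl σ := by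
  rw [mem_blockList]
  exact ⟨⟨0, k_pos l hk hl hn⟩, Fin.ext (bfun_zero l)⟩

lemma gapLists_pos {i : Fin k} {L : List (Fin n)} (hL : L ∈ gapLists l hk hl P i)
    {x : Fin n} (hx : x ∈ L) : 0 < x.1 := by
  have := (gapLists_in_gap l hk hl P hL hx).1
  omega

lemma blockList_not_gapLists (hn : 0 < n) (i : Fin k) :
    blockList l hk hl σ ∉ gapLists l hk hl P i := by
  intro h
  exact absurd (gapLists_pos l hk hl P h (zero_mem_blockList l hk hl σ hn)) (by simp)

lemma assemble_cond1 (hn : 0 < n) :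
    ∀ L ∈ assembleSet l hk hl σ P, L ≠ [] ∧ L.Nodup := by
  intro L hL
  rcases (mem_assembleSet l hk hl σ P).1 hL with rfl | ⟨i, hi⟩
  · constructor
    · intro h
      have hlen : (blockList l hk hl σ).length = k := by simp [blockList]
      rw [h, List.length_nil] at hlen
      have := k_pos l hk hl hn
      omega
    · exact List.nodup_ofFn.2 ((bF_injective l hk hl).comp σ.injective)
  · obtain ⟨M, hM, rfl⟩ := (mem_gapLists l hk hl P).1 hi
    obtain ⟨hM1, hM2⟩ := (P i).2.1 M hM
    refine ⟨by simpa using hM1, hM2.map (eF_injective l hk hl i)⟩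

lemma assemble_cond2 (hn : 0 < n) :
    ∀ x : Fin n, ∃! L, L ∈ assembleSet l hk hl σ P ∧ x ∈ L := by
  intro x
  obtain ⟨i, hle, hlt⟩ := exists_gap l hk hl x
  rcases eq_or_lt_of_le hle with heq | hgt
  · -- x is a block element
    have hx : x = bF l hk hl i := Fin.ext heq.symm
    refine ⟨blockList l hk hl σ, ⟨(mem_assembleSet l hk hl σ P).2 (Or.inl rfl), ?_⟩, ?_⟩
    · exact (mem_blockList l hk hl σ).2 ⟨i, hx.symm⟩
    · rintro L' ⟨hL', hxL'⟩
      rcases (mem_assembleSet l hk hl σ P).1 hL' with rfl | ⟨i', hi'⟩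
      · rfl
      · exact absurd (hx ▸ gapLists_in_gap l hk hl P hi' hxL')
          (bfun_not_gap l hk hl i'.1 i)
  · -- x is in gap i
    have hgap : InGap l i.1 x := ⟨hgt, hlt⟩
    obtain ⟨y, hy⟩ := in_gap_eq_eF l hk hl hgap
    obtain ⟨M, ⟨hM, hyM⟩, hMuniq⟩ := (P i).2.2.1 y
    refine ⟨List.map (eF l hk hl i) M, ⟨(mem_assembleSet l hk hl σ P).2
      (Or.inr ⟨i, (mem_gapLists l hk hl P).2 ⟨M, hM, rfl⟩⟩),
      hy ▸ List.mem_map_of_mem hyM⟩, ?_⟩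
    rintro L' ⟨hL', hxL'⟩
    rcases (mem_assembleSet l hk hl σ P).1 hL' with rfl | ⟨i', hi'⟩
    · obtain ⟨j, hj⟩ := (mem_blockList l hk hl σ).1 hxL'
      exact absurd (hj ▸ hgap) (bfun_not_gap l hk hl i.1 j)
    · have hgap' : InGap l i'.1 x := gapLists_in_gap l hk hl P hi' hxL'
      have hii : i' = i := Fin.ext (gap_unique l hgap' hgap)
      subst hii
      obtain ⟨M', hM', rfl⟩ := (mem_gapLists l hk hl P).1 hi'
      obtain ⟨y', hy'M, hy'⟩ := List.mem_map.1 hxL'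
      have : y' = y := eF_injective l hk hl i' (by rw [hy', hy])
      subst this
      rw [hMuniq M' ⟨hM', hy'M⟩]

lemma assemble_cond3 (hn : 0 < n) :
    ¬ ∃ a b c d : Fin n, a < b ∧ b < c ∧ c < d ∧
      ∃ l₁ ∈ assembleSet l hk hl σ P, ∃ l₂ ∈ assembleSet l hk hl σ P,
        l₁ ≠ l₂ ∧ a ∈ l₁ ∧ c ∈ l₁ ∧ b ∈ l₂ ∧ d ∈ l₂ := by
  rintro ⟨a, b, c, d, hab, hbc, hcd, L1, hL1, L2, hL2, hne, ha, hc, hb, hd⟩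
  rw [Fin.lt_def] at hab hbc hcd
  rcases (mem_assembleSet l hk hl σ P).1 hL1 with rfl | ⟨i1, hi1⟩
  · rcases (mem_assembleSet l hk hl σ P).1 hL2 with rfl | ⟨i2, hi2⟩
    · exact hne rfl
    · -- L1 is the block, b and d in gap i2, c between b and d is a block element
      obtain ⟨j, hj⟩ := (mem_blockList l hk hl σ).1 hc
      obtain ⟨h1a, h1b⟩ := gapLists_in_gap l hk hl P hi2 hb
      obtain ⟨h2a, h2b⟩ := gapLists_in_gap l hk hl P hi2 hd
      have hjv : bfun l j.1 = c.1 := congrArg Fin.val hj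
      refine absurd (?_ : InGap l i2.1 (bF l hk hl j)) (bfun_not_gap l hk hl i2.1 j)
      have hbv : (bF l hk hl j).1 = bfun l j.1 := rfl
      exact ⟨by omega, by omega⟩
  · rcases (mem_assembleSet l hk hl σ P).1 hL2 with rfl | ⟨i2, hi2⟩
    · obtain ⟨j, hj⟩ := (mem_blockList l hk hl σ).1 hb
      obtain ⟨h1a, h1b⟩ := gapLists_in_gap l hk hl P hi1 ha
      obtain ⟨h2a, h2b⟩ := gapLists_in_gap l hk hl P hi1 hc
      have hjv : bfun l j.1 = b.1 := congrArg Fin.val hj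
      refine absurd (?_ : InGap l i1.1 (bF l hk hl j)) (bfun_not_gap l hk hl i1.1 j)
      have hbv : (bF l hk hl j).1 = bfun l j.1 := rfl
      exact ⟨by omega, by omega⟩
    · have hga := gapLists_in_gap l hk hl P hi1 ha
      have hgc := gapLists_in_gap l hk hl P hi1 hc
      have hgb := gapLists_in_gap l hk hl P hi2 hb
      obtain ⟨ha1, ha2⟩ := hga
      obtain ⟨hc1, hc2⟩ := hgc
      have hgb' : InGap l i1.1 b := ⟨by omega, by omega⟩
      have hii : i2 = i1 := Fin.ext (gap_unique l hgb hgb')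
      subst hii
      obtain ⟨M1, hM1, rfl⟩ := (mem_gapLists l hk hl P).1 hi1
      obtain ⟨M2, hM2, rfl⟩ := (mem_gapLists l hk hl P).1 hi2
      obtain ⟨ya, hya, hya'⟩ := List.mem_map.1 ha
      obtain ⟨yb, hyb, hyb'⟩ := List.mem_map.1 hb
      obtain ⟨yc, hyc, hyc'⟩ := List.mem_map.1 hc
      obtain ⟨yd, hyd, hyd'⟩ := List.mem_map.1 hd
      have hva := congrArg Fin.val hya'; rw [eF_val] at hva
      have hvb := congrArg Fin.val hyb'; rw [eF_val] at hvb
      have hvc := congrArg Fin.val hyc'; rw [eF_val] at hvc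
      have hvd := congrArg Fin.val hyd'; rw [eF_val] at hvd
      have hMne : M1 ≠ M2 := fun h => hne (by rw [h])
      exact (P i2).2.2.2 ⟨ya, yb, yc, yd, by rw [Fin.lt_def]; omega,
        by rw [Fin.lt_def]; omega, by rw [Fin.lt_def]; omega,
        M1, hM1, M2, hM2, hMne, hya, hyc, hyb, hyd⟩

end Assemble2

/-- generic helper: `filterMap` inverts `map` -/
lemma filterMap_map_of_forall {α β : Type*} (f : α → Option β) (g : β → α) :
    ∀ L : List α, (∀ x ∈ L, ∃ y, f x = some y ∧ g y = x) → (L.filterMap f).map g = L := by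
  intro L
  induction L with
  | nil => simp
  | cons a L ih =>
    intro h
    obtain ⟨y, hy1, hy2⟩ := h a (List.mem_cons_self)
    rw [List.filterMap_cons, hy1, List.map_cons, hy2,
      ih (fun x hx => h x (List.mem_cons_of_mem a hx))]

/-- the assembling map -/
noncomputable def assemble {n : ℕ} (hn : 0 < n) : D n → SetOfNCLists n := fun x =>
  ⟨assembleSet x.2.1.1 (Nat.lt_succ_iff.mp x.1.isLt) x.2.1.2 x.2.2.1 x.2.2.2,
    assemble_cond1 _ _ _ _ _ hn, assemble_cond2 _ _ _ _ _ hn, assemble_cond3 _ _ _ _ _ hn⟩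

lemma assemble_injective {n : ℕ} (hn : 0 < n) : Function.Injective (assemble hn) := by
  rintro ⟨k1, l1, σ1, P1⟩ ⟨k2, l2, σ2, P2⟩ h
  have hS : assembleSet l1.1 (Nat.lt_succ_iff.mp k1.isLt) l1.2 σ1 P1
      = assembleSet l2.1 (Nat.lt_succ_iff.mp k2.isLt) l2.2 σ2 P2 := congrArg Subtype.val h
  set hk1 : k1.1 ≤ n := Nat.lt_succ_iff.mp k1.isLt with hhk1
  set hk2 : k2.1 ≤ n := Nat.lt_succ_iff.mp k2.isLt with hhk2
  -- the block lists agree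
  have hmem1 : blockList l1.1 hk1 l1.2 σ1 ∈ assembleSet l2.1 hk2 l2.2 σ2 P2 := by
    rw [← hS]; exact Finset.mem_insert_self _ _
  have hbeq : blockList l1.1 hk1 l1.2 σ1 = blockList l2.1 hk2 l2.2 σ2 :=
    (assemble_cond2 l2.1 hk2 l2.2 σ2 P2 hn ⟨0, hn⟩).unique
      ⟨hmem1, zero_mem_blockList l1.1 hk1 l1.2 σ1 hn⟩
      ⟨Finset.mem_insert_self _ _, zero_mem_blockList l2.1 hk2 l2.2 σ2 hn⟩
  -- hence k1 = k2
  have hkk : k1 = k2 := by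
    have := congrArg List.length hbeq
    simp only [blockList, List.length_ofFn] at this
    exact Fin.ext this
  subst hkk
  -- the enumerations of the block agree
  have hbF : bF l1.1 hk1 l1.2 = bF l2.1 hk2 l2.2 := by
    haveI : WellFoundedLT (Fin k1.1) := inferInstance
    refine ((bF_strictMono l1.1 hk1 l1.2).range_inj (bF_strictMono l2.1 hk2 l2.2)).1 ?_
    ext x
    constructor
    · rintro ⟨i, rfl⟩
      have : bF l1.1 hk1 l1.2 i ∈ blockList l2.1 hk2 l2.2 σ2 := by
        rw [← hbeq]; exact (mem_blockList _ _ _ _).2 ⟨i, rfl⟩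
      obtain ⟨j, hj⟩ := (mem_blockList _ _ _ _).1 this
      exact ⟨j, hj⟩
    · rintro ⟨i, rfl⟩
      have : bF l2.1 hk2 l2.2 i ∈ blockList l1.1 hk1 l1.2 σ1 := by
        rw [hbeq]; exact (mem_blockList _ _ _ _).2 ⟨i, rfl⟩
      obtain ⟨j, hj⟩ := (mem_blockList _ _ _ _).1 this
      exact ⟨j, hj⟩
  have hbfun : ∀ i ≤ k1.1, bfun l1.1 i = bfun l2.1 i := by
    intro i hi
    rcases eq_or_lt_of_le hi with rfl | hi
    · rw [bfun_top l1.1 hk1 l1.2, bfun_top l2.1 hk2 l2.2]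
    · exact congrArg Fin.val (congrFun hbF ⟨i, hi⟩)
  -- hence l1 = l2
  have hll : l1 = l2 := by
    refine Subtype.ext (Finsupp.ext fun i => ?_)
    rcases lt_or_ge i k1.1 with hi | hi
    · have e1 := bfun_succ l1.1 i
      have e2 := bfun_succ l2.1 i
      have := hbfun i (le_of_lt hi)
      have := hbfun (i + 1) hi
      omega
    · have z1 : l1.1 i = 0 := by
        by_contra hz
        have := (mem_finsuppAntidiag.1 l1.2).2 (Finsupp.mem_support_iff.2 hz)
        rw [Finset.mem_range] at this
        omega
      have z2 : l2.1 i = 0 := by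
        by_contra hz
        have := (mem_finsuppAntidiag.1 l2.2).2 (Finsupp.mem_support_iff.2 hz)
        rw [Finset.mem_range] at this
        omega
      rw [z1, z2]
  subst hll
  -- hence σ1 = σ2
  have hσ : σ1 = σ2 := by
    refine Equiv.ext fun j => ?_
    have := List.ofFn_injective hbeq
    have := congrFun this j
    exact bF_injective l1.1 hk1 l1.2 (by rw [hbF] at this ⊢; exact this)
  subst hσ
  -- hence P1 = P2
  have hP : P1 = P2 := by
    funext i
    have hgap : gapLists l1.1 hk1 l1.2 P1 i = gapLists l1.1 hk1 l1.2 P2 i := by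
      have key : ∀ (Q R : ∀ j : Fin k1.1, SetOfNCLists (l1.1 j.1)),
          assembleSet l1.1 hk1 l1.2 σ1 Q = assembleSet l1.1 hk1 l1.2 σ1 R →
          ∀ L ∈ gapLists l1.1 hk1 l1.2 Q i, L ∈ gapLists l1.1 hk1 l1.2 R i := by
        intro Q R hQR L hL
        have hLS : L ∈ assembleSet l1.1 hk1 l1.2 σ1 R := by
          rw [← hQR, mem_assembleSet]; exact Or.inr ⟨i, hL⟩
        rcases (mem_assembleSet _ _ _ _ _).1 hLS with rfl | ⟨i', hi'⟩
        · exact absurd hL (blockList_not_gapLists l1.1 hk1 l1.2 σ1 Q hn i)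
        · obtain ⟨M, hM, rfl⟩ := (mem_gapLists _ _ _ _).1 hL
          obtain ⟨hMne, -⟩ := (Q i).2.1 M hM
          obtain ⟨y, hy⟩ := List.exists_mem_of_ne_nil M hMne
          have hx : eF l1.1 hk1 l1.2 i y ∈ List.map (eF l1.1 hk1 l1.2 i) M :=
            List.mem_map_of_mem hy
          have g1 : InGap l1.1 i.1 (eF l1.1 hk1 l1.2 i y) := eF_in_gap l1.1 hk1 l1.2 i y
          have g2 : InGap l1.1 i'.1 (eF l1.1 hk1 l1.2 i y) :=
            gapLists_in_gap l1.1 hk1 l1.2 R hi' hx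
          have : i' = i := Fin.ext (gap_unique l1.1 g2 g1)
          subst this
          exact hi'
      exact Finset.Subset.antisymm (fun L hL => key P1 P2 hS L hL)
        (fun L hL => key P2 P1 hS.symm L hL)
    have himg := hgap
    rw [gapLists, gapLists] at himg
    have hinj : Function.Injective (List.map (eF l1.1 hk1 l1.2 i)) :=
      List.map_injective_iff.2 (eF_injective l1.1 hk1 l1.2 i)
    exact Subtype.ext (Finset.image_injective hinj himg)
  subst hP
  rfl

lemma assemble_surjective {n : ℕ} (hn : 0 < n) : Function.Surjective (assemble hn) := by
  rintro ⟨S, hS1, hS2, hS3⟩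
  classical
  -- the block containing 0
  obtain ⟨L0, ⟨hL0S, h0L0⟩, hL0u⟩ := hS2 ⟨0, hn⟩
  have hL0nodup : L0.Nodup := (hS1 L0 hL0S).2
  set B : Finset (Fin n) := L0.toFinset with hB
  set k : ℕ := B.card with hkdef
  have hkn : k ≤ n := le_trans (Finset.card_le_univ B) (by simp)
  have hk0 : 0 < k := Finset.card_pos.2 ⟨⟨0, hn⟩, List.mem_toFinset.2 h0L0⟩
  set f : Fin k ↪o Fin n := B.orderEmbOfFin hkdef.symm with hf
  have hfmem : ∀ i, f i ∈ B := fun i => B.orderEmbOfFin_mem hkdef.symm i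
  have hfrange : Set.range f = ↑B := B.range_orderEmbOfFin hkdef.symm
  have hfmono : StrictMono f := OrderEmbedding.strictMono f
  have hBmem : ∀ x : Fin n, x ∈ B ↔ x ∈ L0 := fun x => List.mem_toFinset
  have hblock : ∀ L ∈ S, ∀ x ∈ L, x ∈ B → L = L0 := fun L hL x hxL hxB =>
    (hS2 x).unique ⟨hL, hxL⟩ ⟨hL0S, (hBmem x).1 hxB⟩
  have hf0 : f ⟨0, hk0⟩ = ⟨0, hn⟩ := by
    have : (⟨0, hn⟩ : Fin n) ∈ Set.range f := by rw [hfrange]; exact_mod_cast List.mem_toFinset.2 h0L0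
    obtain ⟨i, hi⟩ := this
    have h1 : f ⟨0, hk0⟩ ≤ f i := hfmono.monotone (by simp [Fin.le_def])
    rw [hi] at h1
    rw [Fin.le_def] at h1
    have h0 : ((⟨0, hn⟩ : Fin n)).1 = 0 := rfl
    exact Fin.ext (by omega)
  -- the global enumeration of the block, padded above
  set bb : ℕ → ℕ := fun i => if h : i < k then (f ⟨i, h⟩).1 else n + (i - k) with hbb
  have hbbext : ∀ (i : ℕ) (h : i < k), bb i = (f ⟨i, h⟩).1 := fun i h => dif_pos h
  have hbb0 : bb 0 = 0 := by rw [hbbext 0 hk0, hf0]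
  have hbbk : bb k = n := by simp [hbb]
  have hbbmono : StrictMono bb := by
    refine strictMono_nat_of_lt_succ fun i => ?_
    rcases lt_or_ge (i + 1) k with h1 | h1
    · rw [hbbext i (by omega), hbbext (i + 1) h1]
      exact hfmono (by simp [Fin.lt_def])
    · rcases lt_or_ge i k with h2 | h2
      · rw [hbbext i h2, hbb]
        simp only [dif_neg (by omega : ¬ i + 1 < k)]
        have := (f ⟨i, h2⟩).isLt
        omega
      · rw [hbb]
        simp only [dif_neg (by omega : ¬ i < k), dif_neg (by omega : ¬ i + 1 < k)]
        omega
  have hxB_iff : ∀ x : Fin n, x ∈ B ↔ ∃ i < k, bb i = x.1 := by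
    intro x
    constructor
    · intro hx
      have : x ∈ Set.range f := by rw [hfrange]; exact_mod_cast hx
      obtain ⟨i, hi⟩ := this
      exact ⟨i.1, i.isLt, by rw [hbbext i.1 i.isLt]; exact congrArg Fin.val (by
        rw [show (⟨i.1, i.isLt⟩ : Fin k) = i from Fin.ext rfl, hi])⟩
    · rintro ⟨i, hik, hi⟩
      have : x = f ⟨i, hik⟩ := Fin.ext (by rw [← hi, hbbext i hik])
      rw [this]
      exact hfmem _
  -- the gap sizes
  set lfun : ℕ → ℕ := fun i => if i < k then bb (i + 1) - bb i - 1 else 0 with hlfun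
  set l : ℕ →₀ ℕ := Finsupp.onFinset (range k) lfun
    (by intro i hi; rw [Finset.mem_range]; by_contra hc; exact hi (by simp [hlfun, if_neg hc])) with hldef
  have hlval : ∀ i, l i = lfun i := fun _ => rfl
  have hlvalk : ∀ i, i < k → l i = bb (i + 1) - bb i - 1 := fun i h => by
    rw [hlval, hlfun]; exact if_pos h
  have hsum1 : ∀ m, m ≤ k → ∑ i ∈ range m, (l i + 1) = bb m := by
    intro m
    induction m with
    | zero => intro _; simp [hbb0]
    | succ m ih =>
      intro hm
      rw [Finset.sum_range_succ, ih (by omega), hlvalk m (by omega)]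
      have := hbbmono (show m < m + 1 by omega)
      omega
  have hsum : ∑ i ∈ range k, l i = n - k := by
    have h1 := hsum1 k le_rfl
    rw [Finset.sum_add_distrib, Finset.sum_const, Finset.card_range, smul_eq_mul,
      mul_one, hbbk] at h1
    omega
  have hl : l ∈ finsuppAntidiag (range k) (n - k) :=
    mem_finsuppAntidiag.2 ⟨hsum, Finsupp.support_onFinset_subset⟩
  have hbfun : ∀ i, i ≤ k → bfun l i = bb i := by
    intro i
    induction i with
    | zero => intro _; rw [bfun_zero, hbb0]
    | succ i ih =>
      intro hi
      rw [bfun_succ, ih (by omega), hlvalk i (by omega)]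
      have := hbbmono (show i < i + 1 by omega)
      omega
  have hbFf : ∀ i : Fin k, bF l hkn hl i = f i := fun i => Fin.ext (by
    rw [show (bF l hkn hl i).1 = bfun l i.1 from rfl, hbfun i.1 (le_of_lt i.isLt),
      hbbext i.1 i.isLt])
  -- the permutation ordering the block
  have hlen : L0.length = k := by
    rw [hkdef, hB]; exact (List.toFinset_card_of_nodup hL0nodup).symm
  have hex : ∀ j : Fin k, ∃ i : Fin k, f i = L0.get (Fin.cast hlen.symm j) := by
    intro j
    have : L0.get (Fin.cast hlen.symm j) ∈ Set.range f := by
      rw [hfrange]; exact_mod_cast (hBmem _).2 (List.mem_iff_get.mpr ⟨Fin.cast hlen.symm j, rfl⟩)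
    obtain ⟨i, hi⟩ := this
    exact ⟨i, hi⟩
  choose gf hgf using hex
  have hginj : Function.Injective gf := by
    intro a b hab
    have h1 : L0.get (Fin.cast hlen.symm a) = L0.get (Fin.cast hlen.symm b) := by
      rw [← hgf a, ← hgf b, hab]
    have := List.nodup_iff_injective_get.1 hL0nodup h1
    have hv : (Fin.cast hlen.symm a).1 = (Fin.cast hlen.symm b).1 := congrArg Fin.val this
    exact Fin.ext hv
  set σ : Equiv.Perm (Fin k) := Equiv.ofBijective gf (Finite.injective_iff_bijective.1 hginj)
    with hσdef
  have hσ : ∀ j, σ j = gf j := fun j => rfl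
  have hblockL0 : blockList l hkn hl σ = L0 := by
    refine List.ext_getElem (by rw [blockList_length, hlen]) fun i h1 h2 => ?_
    have hik : i < k := by rwa [blockList_length] at h1
    have hgoal : (blockList l hkn hl σ)[i] = bF l hkn hl (σ ⟨i, hik⟩) := by
      show (List.ofFn fun j => bF l hkn hl (σ j))[i] = _
      exact List.getElem_ofFn h1
    rw [hgoal, hσ, hbFf, hgf ⟨i, hik⟩]
    simp [List.get_eq_getElem]
  -- elements of other lists avoid B, and blocks embed in gaps
  have hnotB : ∀ L ∈ S, L ≠ L0 → ∀ x ∈ L, x ∉ B := fun L hL hne x hxL hxB =>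
    hne (hblock L hL x hxL hxB)
  have hgapfind : ∀ (x : Fin n), x ∉ B → ∃ i : Fin k, InGap l i.1 x := by
    intro x hx
    obtain ⟨i, h1, h2⟩ := exists_gap l hkn hl x
    refine ⟨i, lt_of_le_of_ne h1 ?_, h2⟩
    intro he
    exact hx ((hxB_iff x).2 ⟨i.1, i.isLt, by rw [← hbfun i.1 (le_of_lt i.isLt)]; exact he⟩)
  have hbFmem : ∀ m : Fin k, bF l hkn hl m ∈ L0 := fun m =>
    (hBmem _).1 (by rw [hbFf]; exact hfmem m)
  have hBnotgap : ∀ (x : Fin n), x ∈ B → ∀ i : Fin k, ¬ InGap l i.1 x := by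
    intro x hx i hgap
    obtain ⟨m, hm, hbm⟩ := (hxB_iff x).1 hx
    have hxm : x = bF l hkn hl ⟨m, hm⟩ := Fin.ext (by
      rw [show (bF l hkn hl ⟨m, hm⟩).1 = bfun l m from rfl, hbfun m (le_of_lt hm), hbm])
    exact bfun_not_gap l hkn hl i.1 ⟨m, hm⟩ (hxm ▸ hgap)
  -- KEY: a list other than the block of 0 lies inside a single gap
  have hkey : ∀ L ∈ S, L ≠ L0 → ∀ (i : Fin k) (x : Fin n), x ∈ L → InGap l i.1 x →
      ∀ z ∈ L, InGap l i.1 z := by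
    intro L hL hne i x hxL hgap z hzL
    obtain ⟨j, hjz⟩ := hgapfind z (hnotB L hL hne z hzL)
    rcases eq_or_ne j i with rfl | hji
    · exact hjz
    exfalso
    have hLne : L0 ≠ L := fun h => hne h.symm
    obtain ⟨hjz1, hjz2⟩ := hjz
    obtain ⟨hgx1, hgx2⟩ := hgap
    have hvj : (bF l hkn hl j).1 = bfun l j.1 := rfl
    have hvi : (bF l hkn hl i).1 = bfun l i.1 := rfl
    rcases lt_or_gt_of_ne (show j.1 ≠ i.1 from fun h => hji (Fin.ext h)) with hj | hj
    · have h1 : bfun l (j.1 + 1) ≤ bfun l i.1 := (bfun_mono l).monotone (by omega)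
      exact hS3 ⟨bF l hkn hl j, z, bF l hkn hl i, x,
        by rw [Fin.lt_def]; omega, by rw [Fin.lt_def]; omega, by rw [Fin.lt_def]; omega,
        L0, hL0S, L, hL, hLne, hbFmem j, hbFmem i, hzL, hxL⟩
    · have h1 : bfun l (i.1 + 1) ≤ bfun l j.1 := (bfun_mono l).monotone (by omega)
      exact hS3 ⟨bF l hkn hl i, x, bF l hkn hl j, z,
        by rw [Fin.lt_def]; omega, by rw [Fin.lt_def]; omega, by rw [Fin.lt_def]; omega,
        L0, hL0S, L, hL, hLne, hbFmem i, hbFmem j, hxL, hzL⟩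
  -- the retraction onto each gap
  set ρ : (i : Fin k) → Fin n → Option (Fin (l i.1)) := fun i x =>
    if h : bfun l i.1 < x.1 ∧ x.1 < bfun l (i.1 + 1) then
      some ⟨x.1 - bfun l i.1 - 1, by have hs := bfun_succ l i.1; omega⟩ else none with hρdef
  have hρ_eF : ∀ (i : Fin k) (y : Fin (l i.1)), ρ i (eF l hkn hl i y) = some y := by
    intro i y
    obtain ⟨h1, h2⟩ := eF_in_gap l hkn hl i y
    rw [hρdef]
    simp only
    rw [dif_pos ⟨h1, h2⟩]
    refine congrArg some (Fin.ext ?_)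
    show (eF l hkn hl i y).1 - bfun l i.1 - 1 = y.1
    rw [eF_val]
    omega
  have hρ_some : ∀ (i : Fin k) (x : Fin n) (y : Fin (l i.1)),
      ρ i x = some y → eF l hkn hl i y = x := by
    intro i x y h
    rw [hρdef] at h
    simp only at h
    split_ifs at h with hc
    have hv : x.1 - bfun l i.1 - 1 = y.1 := congrArg Fin.val (Option.some.inj h)
    exact Fin.ext (by rw [eF_val]; omega)
  have hround1 : ∀ (i : Fin k) (M : List (Fin (l i.1))),
      (M.map (eF l hkn hl i)).filterMap (ρ i) = M := by
    intro i M
    rw [List.filterMap_map, show (ρ i) ∘ (eF l hkn hl i) = some from funext (hρ_eF i),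
      List.filterMap_some]
  have hround2 : ∀ (i : Fin k) (L : List (Fin n)), (∀ x ∈ L, InGap l i.1 x) →
      (L.filterMap (ρ i)).map (eF l hkn hl i) = L := by
    intro i L hL
    refine filterMap_map_of_forall _ _ L fun x hx => ?_
    obtain ⟨y, hy⟩ := in_gap_eq_eF l hkn hl (hL x hx)
    exact ⟨y, by rw [← hy, hρ_eF], hy⟩
  -- the pieces sitting in each gap
  set Si : (i : Fin k) → Finset (List (Fin (l i.1))) := fun i =>
    (S.filter (fun L => ∀ x ∈ L, bfun l i.1 < x.1 ∧ x.1 < bfun l (i.1 + 1))).image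
      (List.filterMap (ρ i)) with hSidef
  have hSi_mem : ∀ (i : Fin k) (M), M ∈ Si i ↔
      ∃ L ∈ S, (∀ x ∈ L, InGap l i.1 x) ∧ M = L.filterMap (ρ i) := by
    intro i M
    rw [hSidef]
    simp only [Finset.mem_image, Finset.mem_filter]
    constructor
    · rintro ⟨L, ⟨h1, h2⟩, h3⟩; exact ⟨L, h1, h2, h3.symm⟩
    · rintro ⟨L, h1, h2, h3⟩; exact ⟨L, ⟨h1, h2⟩, h3.symm⟩
  have hP1 : ∀ i, ∀ M ∈ Si i, M ≠ [] ∧ M.Nodup := by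
    intro i M hM
    obtain ⟨L, hLS, hgapL, rfl⟩ := (hSi_mem i M).1 hM
    obtain ⟨hLne, hLnd⟩ := hS1 L hLS
    constructor
    · intro h
      rw [← hround2 i L hgapL, h] at hLne
      exact hLne rfl
    · refine List.Nodup.of_map (eF l hkn hl i) ?_
      rw [hround2 i L hgapL]
      exact hLnd
  have hP2 : ∀ i, ∀ y : Fin (l i.1), ∃! M, M ∈ Si i ∧ y ∈ M := by
    intro i y
    obtain ⟨L, ⟨hLS, hxL⟩, hLu⟩ := hS2 (eF l hkn hl i y)
    have hLneL0 : L ≠ L0 := by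
      intro h
      subst h
      exact hBnotgap _ ((hBmem _).2 hxL) i (eF_in_gap l hkn hl i y)
    have hallgap := hkey L hLS hLneL0 i _ hxL (eF_in_gap l hkn hl i y)
    refine ⟨L.filterMap (ρ i), ⟨(hSi_mem i _).2 ⟨L, hLS, hallgap, rfl⟩,
      List.mem_filterMap.2 ⟨_, hxL, hρ_eF i y⟩⟩, ?_⟩
    rintro M' ⟨hM', hyM'⟩
    obtain ⟨L', hL'S, hgapL', rfl⟩ := (hSi_mem i M').1 hM'
    obtain ⟨x', hx'L', hρx'⟩ := List.mem_filterMap.1 hyM'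
    have : eF l hkn hl i y = x' := hρ_some i x' y hρx'
    rw [hLu L' ⟨hL'S, this ▸ hx'L'⟩]
  have hP3 : ∀ i : Fin k, ¬ ∃ a b c d : Fin (l i.1), a < b ∧ b < c ∧ c < d ∧
      ∃ l₁ ∈ Si i, ∃ l₂ ∈ Si i, l₁ ≠ l₂ ∧ a ∈ l₁ ∧ c ∈ l₁ ∧ b ∈ l₂ ∧ d ∈ l₂ := by
    rintro i ⟨a, b, c, d, hab, hbc, hcd, M1, hM1, M2, hM2, hMne, ha, hc, hb, hd⟩
    obtain ⟨L1, hL1S, hgapL1, rfl⟩ := (hSi_mem i M1).1 hM1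
    obtain ⟨L2, hL2S, hgapL2, rfl⟩ := (hSi_mem i M2).1 hM2
    have hL12 : L1 ≠ L2 := fun h => hMne (by rw [h])
    obtain ⟨xa, hxa, hρa⟩ := List.mem_filterMap.1 ha
    obtain ⟨xc, hxc, hρc⟩ := List.mem_filterMap.1 hc
    obtain ⟨xb, hxb, hρb⟩ := List.mem_filterMap.1 hb
    obtain ⟨xd, hxd, hρd⟩ := List.mem_filterMap.1 hd
    have hea := hρ_some i xa a hρa
    have heb := hρ_some i xb b hρb
    have hec := hρ_some i xc c hρc
    have hed := hρ_some i xd d hρd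
    rw [Fin.lt_def] at hab hbc hcd
    have hva := congrArg Fin.val hea; rw [eF_val] at hva
    have hvb := congrArg Fin.val heb; rw [eF_val] at hvb
    have hvc := congrArg Fin.val hec; rw [eF_val] at hvc
    have hvd := congrArg Fin.val hed; rw [eF_val] at hvd
    exact hS3 ⟨xa, xb, xc, xd, by rw [Fin.lt_def]; omega, by rw [Fin.lt_def]; omega,
      by rw [Fin.lt_def]; omega, L1, hL1S, L2, hL2S, hL12, hxa, hxc, hxb, hxd⟩
  set P : ∀ i : Fin k, SetOfNCLists (l i.1) := fun i => ⟨Si i, hP1 i, hP2 i, hP3 i⟩ with hPdef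
  -- assemble the preimage
  refine ⟨⟨⟨k, Nat.lt_succ_of_le hkn⟩, ⟨l, hl⟩, σ, P⟩, ?_⟩
  refine Subtype.ext ?_
  show assembleSet l hkn hl σ P = S
  ext L
  rw [mem_assembleSet]
  constructor
  · rintro (rfl | ⟨i, hi⟩)
    · rw [hblockL0]; exact hL0S
    · obtain ⟨M, hM, rfl⟩ := (mem_gapLists l hkn hl P).1 hi
      have hM2 : M ∈ Si i := hM
      obtain ⟨L', hL'S, hgapL', rfl⟩ := (hSi_mem i M).1 hM2
      rw [hround2 i L' hgapL']
      exact hL'S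
  · intro hLS
    by_cases hL0 : L = L0
    · exact Or.inl (by rw [hL0, hblockL0])
    · obtain ⟨x, hx⟩ := List.exists_mem_of_ne_nil L (hS1 L hLS).1
      obtain ⟨i, hgapx⟩ := hgapfind x (hnotB L hLS hL0 x hx)
      have hallgap := hkey L hLS hL0 i x hx hgapx
      refine Or.inr ⟨i, (mem_gapLists l hkn hl P).2 ⟨L.filterMap (ρ i), ?_, (hround2 i L hallgap).symm⟩⟩
      exact (hSi_mem i _).2 ⟨L, hLS, hallgap, rfl⟩


lemma main_card (n : ℕ) (hn : 0 < n) : u n = Nat.card (D n) :=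
  (Nat.card_eq_of_bijective (assemble hn)
    ⟨assemble_injective hn, assemble_surjective hn⟩).symm

end NCLaux

open NCLaux in
theorem u_functional_equation :
    ∀ n : ℕ, PowerSeries.coeff (R := ℕ) n (PowerSeries.mk u) =
      ∑ k ∈ Finset.range (n + 1), PowerSeries.coeff (R := ℕ) n
        ((PowerSeries.C (R := ℕ) k.factorial) *
          (PowerSeries.X * PowerSeries.mk u) ^ k) := by
  intro n
  rcases Nat.eq_zero_or_pos n with rfl | hn
  · simp [PowerSeries.coeff_mk, u_zero]
  · rw [PowerSeries.coeff_mk, main_card n hn, card_D]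
    refine Finset.sum_congr rfl fun k hk => ?_
    have hk' : k ≤ n := by
      have := Finset.mem_range.1 hk; omega
    rw [PowerSeries.coeff_C_mul, mul_pow]
    rw [PowerSeries.coeff_X_pow_mul', if_pos hk', PowerSeries.coeff_pow]
    congr 1
    refine Finset.sum_congr rfl fun l _ => Finset.prod_congr rfl fun i _ => ?_
    rw [PowerSeries.coeff_mk]
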